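/- Let L be an e-cyclic residuated lattice and let H be a convex subalgebra of L. Then H^⊥ = ⋂{P : P is a minimal prime convex subalgebra of L with H ⊈ P}. -/

import Mathlib

universe u

/-- A residuated lattice: a lattice-ordered monoid with left and right residuals.
`ldiv x z` is `x \ z` and `rdiv z y` is `z / y`. -/
class ResiduatedLattice (α : Type u) extends Lattice α, Monoid α where
  ldiv : α → α → α
  rdiv : α → α → α
  mul_le_iff_le_ldiv : ∀ x y z : α, x * y ≤ z ↔ y ≤ ldiv x z
  mul_le_iff_le_rdiv : ∀ x y z : α, x * y ≤ z ↔ x ≤ rdiv z y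

namespace ResiduatedLattice

variable {α : Type u} [ResiduatedLattice α]

/-- `L` is e-cyclic if `x \ e = e / x` for all `x`. -/
def ECyclic (α : Type u) [ResiduatedLattice α] : Prop :=
  ∀ x : α, ldiv x 1 = rdiv 1 x

/-- Absolute value: `|x| = x ⊓ (e / x) ⊓ e`. -/
def absv (x : α) : α := x ⊓ rdiv 1 x ⊓ 1

/-- A convex subalgebra: contains `e`, closed under all the operations, and order-convex. -/
structure IsConvexSubalgebra (H : Set α) : Prop where
  one_mem : (1 : α) ∈ H
  mul_mem : ∀ ⦃x⦄, x ∈ H → ∀ ⦃y⦄, y ∈ H → x * y ∈ H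
  sup_mem : ∀ ⦃x⦄, x ∈ H → ∀ ⦃y⦄, y ∈ H → x ⊔ y ∈ H
  inf_mem : ∀ ⦃x⦄, x ∈ H → ∀ ⦃y⦄, y ∈ H → x ⊓ y ∈ H
  ldiv_mem : ∀ ⦃x⦄, x ∈ H → ∀ ⦃y⦄, y ∈ H → ldiv x y ∈ H
  rdiv_mem : ∀ ⦃x⦄, x ∈ H → ∀ ⦃y⦄, y ∈ H → rdiv x y ∈ H
  convex : ∀ ⦃a⦄, a ∈ H → ∀ ⦃b⦄, b ∈ H → ∀ ⦃x⦄, a ≤ x → x ≤ b → x ∈ H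

/-- `C[S]`: the smallest convex subalgebra containing `S`. -/
def convexClosure (S : Set α) : Set α :=
  ⋂₀ {H : Set α | IsConvexSubalgebra H ∧ S ⊆ H}

end ResiduatedLattice

open ResiduatedLattice

/-- A prime convex subalgebra: a convex subalgebra that is meet-irreducible in the
lattice of convex subalgebras. -/
def IsPrimeConvex {α : Type u} [ResiduatedLattice α] (H : Set α) : Prop :=
  IsConvexSubalgebra H ∧
  ∀ X Y : Set α, IsConvexSubalgebra X → IsConvexSubalgebra Y →
    X ∩ Y ⊆ H → X ⊆ H ∨ Y ⊆ H

/-- A minimal prime convex subalgebra. -/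
def IsMinimalPrimeConvex {α : Type u} [ResiduatedLattice α] (P : Set α) : Prop :=
  IsPrimeConvex P ∧ P ≠ Set.univ ∧
  ∀ Q : Set α, IsPrimeConvex Q → Q ≠ Set.univ → Q ⊆ P → Q = P

/-- The polar `S^⊥ = {a : |a| ⊔ |s| = e for all s ∈ S}`. -/
def polar {α : Type u} [ResiduatedLattice α] (S : Set α) : Set α :=
  {a : α | ∀ s ∈ S, absv a ⊔ absv s = 1}

section Aux

open ResiduatedLattice

variable {α : Type u} [ResiduatedLattice α]

lemma le_ldiv_iff {x y z : α} : y ≤ ldiv x z ↔ x * y ≤ z :=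
  (mul_le_iff_le_ldiv x y z).symm

lemma le_rdiv_iff {x y z : α} : x ≤ rdiv z y ↔ x * y ≤ z :=
  (mul_le_iff_le_rdiv x y z).symm

lemma mul_le_mul'' {a b c d : α} (h1 : a ≤ b) (h2 : c ≤ d) : a * c ≤ b * d := by
  have hbd : a * d ≤ b * d :=
    le_rdiv_iff.1 (le_trans h1 (le_rdiv_iff.2 (le_refl (b * d))))
  exact le_trans (le_ldiv_iff.1 (le_trans h2 (le_ldiv_iff.2 (le_refl (a * d))))) hbd

lemma mul_sup' (a b c : α) : a * (b ⊔ c) = a * b ⊔ a * c := by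
  apply le_antisymm
  · exact le_ldiv_iff.1 (sup_le (le_ldiv_iff.2 le_sup_left) (le_ldiv_iff.2 le_sup_right))
  · exact sup_le (mul_le_mul'' (le_refl a) le_sup_left) (mul_le_mul'' (le_refl a) le_sup_right)

lemma sup_mul' (a b c : α) : (b ⊔ c) * a = b * a ⊔ c * a := by
  apply le_antisymm
  · exact le_rdiv_iff.1 (sup_le (le_rdiv_iff.2 le_sup_left) (le_rdiv_iff.2 le_sup_right))
  · exact sup_le (mul_le_mul'' le_sup_left (le_refl a)) (mul_le_mul'' le_sup_right (le_refl a))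

lemma absv_le_one (x : α) : absv x ≤ 1 := inf_le_right

lemma absv_le_self (x : α) : absv x ≤ x := le_trans inf_le_left inf_le_left

lemma absv_le_rdiv (x : α) : absv x ≤ rdiv 1 x := le_trans inf_le_left inf_le_right

lemma absv_mul_self_le_one (x : α) : absv x * x ≤ 1 :=
  le_rdiv_iff.1 (absv_le_rdiv x)

lemma self_mul_absv_le_one (hec : ECyclic α) (x : α) : x * absv x ≤ 1 :=
  le_ldiv_iff.1 (le_of_le_of_eq (absv_le_rdiv x) (hec x).symm)

lemma absv_one : absv (1 : α) = 1 := by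
  have h1 : (1 : α) ≤ rdiv 1 1 := le_rdiv_iff.2 (le_of_eq (one_mul 1))
  apply le_antisymm (absv_le_one 1)
  exact le_inf (le_inf (le_refl 1) h1) (le_refl 1)

lemma eq_one_of_one_le_absv {x : α} (h : 1 ≤ absv x) : x = 1 := by
  have hx1 : (1 : α) ≤ x := le_trans h (absv_le_self x)
  have hx2 : x ≤ 1 := by
    have : (1 : α) ≤ rdiv 1 x := le_trans h (absv_le_rdiv x)
    have := le_rdiv_iff.1 this
    rwa [one_mul] at this
  exact le_antisymm hx2 hx1

lemma mul_le_left {a b : α} (hb : b ≤ 1) : a * b ≤ a := by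
  have := mul_le_mul'' (le_refl a) hb; rwa [mul_one] at this

lemma mul_le_right {a b : α} (ha : a ≤ 1) : a * b ≤ b := by
  have := mul_le_mul'' ha (le_refl b); rwa [one_mul] at this

lemma ResiduatedLattice.IsConvexSubalgebra.absv_mem {K : Set α} (hK : IsConvexSubalgebra K)
    {x : α} (hx : x ∈ K) : absv x ∈ K :=
  hK.inf_mem (hK.inf_mem hx (hK.rdiv_mem hK.one_mem hx)) hK.one_mem

/-! ### List product lemmas -/

lemma list_prod_le_one {l : List α} (h : ∀ x ∈ l, x ≤ 1) : l.prod ≤ 1 := by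
  induction l with
  | nil => simp
  | cons a t ih =>
    rw [List.prod_cons]
    have := mul_le_mul'' (h a (List.mem_cons_self)) (ih fun x hx => h x (List.mem_cons_of_mem a hx))
    rwa [mul_one] at this

lemma list_prod_eq_one {l : List α} (h : ∀ x ∈ l, x = 1) : l.prod = 1 := by
  induction l with
  | nil => simp
  | cons a t ih =>
    rw [List.prod_cons, h a (List.mem_cons_self),
      ih fun x hx => h x (List.mem_cons_of_mem a hx), mul_one]

lemma map_absv_prod_le (l : List α) : (l.map absv).prod ≤ l.prod := by
  induction l with
  | nil => simp
  | cons a t ih =>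
    rw [List.map_cons, List.prod_cons, List.prod_cons]
    exact mul_le_mul'' (absv_le_self a) ih

lemma map_absv_prod_le_one (l : List α) : (l.map absv).prod ≤ 1 := by
  apply list_prod_le_one
  intro x hx
  rcases List.mem_map.1 hx with ⟨y, _, rfl⟩
  exact absv_le_one y

/-- Row lemma: `∏ⱼ (u ⊔ vⱼ) ≤ u ⊔ ∏ⱼ vⱼ` for negative elements. -/
lemma row_lemma {u : α} (hu : u ≤ 1) {l : List α} (hl : ∀ v ∈ l, v ≤ 1) :
    (l.map (fun v => u ⊔ v)).prod ≤ u ⊔ l.prod := by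
  induction l with
  | nil => simp [hu]
  | cons v t ih =>
    have hv : v ≤ 1 := hl v (List.mem_cons_self)
    have ht : ∀ w ∈ t, w ≤ 1 := fun w hw => hl w (List.mem_cons_of_mem v hw)
    have htp : t.prod ≤ 1 := list_prod_le_one ht
    rw [List.map_cons, List.prod_cons, List.prod_cons]
    calc (u ⊔ v) * (t.map (fun w => u ⊔ w)).prod
        ≤ (u ⊔ v) * (u ⊔ t.prod) := mul_le_mul'' (le_refl _) (ih ht)
      _ = u * u ⊔ u * t.prod ⊔ (v * u ⊔ v * t.prod) := by
          rw [sup_mul', mul_sup', mul_sup']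
      _ ≤ u ⊔ v * t.prod := by
          apply sup_le (sup_le _ _) (sup_le _ le_sup_right)
          · exact le_trans (mul_le_left hu) le_sup_left
          · exact le_trans (mul_le_left htp) le_sup_left
          · exact le_trans (mul_le_right hv) le_sup_left

/-- Column lemma: `∏ᵢ (uᵢ ⊔ w) ≤ ∏ᵢ uᵢ ⊔ w` for negative elements. -/
lemma col_lemma {w : α} (hw : w ≤ 1) {l : List α} (hl : ∀ u ∈ l, u ≤ 1) :
    (l.map (fun u => u ⊔ w)).prod ≤ l.prod ⊔ w := by
  induction l with
  | nil => simp
  | cons u t ih =>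
    have hu : u ≤ 1 := hl u (List.mem_cons_self)
    have ht : ∀ v ∈ t, v ≤ 1 := fun v hv => hl v (List.mem_cons_of_mem u hv)
    have htp : t.prod ≤ 1 := list_prod_le_one ht
    rw [List.map_cons, List.prod_cons, List.prod_cons]
    calc (u ⊔ w) * (t.map (fun v => v ⊔ w)).prod
        ≤ (u ⊔ w) * (t.prod ⊔ w) := mul_le_mul'' (le_refl _) (ih ht)
      _ = u * t.prod ⊔ u * w ⊔ (w * t.prod ⊔ w * w) := by
          rw [sup_mul', mul_sup', mul_sup']
      _ ≤ u * t.prod ⊔ w := by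
          apply sup_le (sup_le le_sup_left _) (sup_le _ _)
          · exact le_trans (mul_le_right hu) le_sup_right
          · exact le_trans (mul_le_left htp) le_sup_right
          · exact le_trans (mul_le_left hw) le_sup_right

/-- The list of all pairwise joins. -/
def supProd (l₁ l₂ : List α) : List α :=
  l₁.flatMap fun u => l₂.map fun v => u ⊔ v

lemma mem_supProd {l₁ l₂ : List α} {w : α} (hw : w ∈ supProd l₁ l₂) :
    ∃ u ∈ l₁, ∃ v ∈ l₂, w = u ⊔ v := by
  simp only [supProd, List.mem_flatMap, List.mem_map] at hw
  rcases hw with ⟨u, hu, v, hv, rfl⟩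
  exact ⟨u, hu, v, hv, rfl⟩

lemma supProd_prod_le {l₁ l₂ : List α} (h₁ : ∀ u ∈ l₁, u ≤ 1) (h₂ : ∀ v ∈ l₂, v ≤ 1) :
    (supProd l₁ l₂).prod ≤ l₁.prod ⊔ l₂.prod := by
  induction l₁ with
  | nil => simpa [supProd] using le_sup_left
  | cons u t ih =>
    have hu : u ≤ 1 := h₁ u (List.mem_cons_self)
    have ht : ∀ v ∈ t, v ≤ 1 := fun v hv => h₁ v (List.mem_cons_of_mem u hv)
    have htp : t.prod ≤ 1 := list_prod_le_one ht
    have h2p : l₂.prod ≤ 1 := list_prod_le_one h₂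
    have hrow := row_lemma hu h₂
    have hrest := ih ht
    have heq : supProd (u :: t) l₂ = (l₂.map fun v => u ⊔ v) ++ supProd t l₂ := by
      simp [supProd]
    rw [heq, List.prod_append, List.prod_cons]
    calc (l₂.map fun v => u ⊔ v).prod * (supProd t l₂).prod
        ≤ (u ⊔ l₂.prod) * (t.prod ⊔ l₂.prod) := mul_le_mul'' hrow hrest
      _ = u * t.prod ⊔ u * l₂.prod ⊔ (l₂.prod * t.prod ⊔ l₂.prod * l₂.prod) := by
          rw [sup_mul', mul_sup', mul_sup']
      _ ≤ u * t.prod ⊔ l₂.prod := by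
          apply sup_le (sup_le le_sup_left _) (sup_le _ _)
          · exact le_trans (mul_le_right hu) le_sup_right
          · exact le_trans (mul_le_left htp) le_sup_right
          · exact le_trans (mul_le_left h2p) le_sup_right

end Aux

section Gen

open ResiduatedLattice

variable {α : Type u} [ResiduatedLattice α]

/-- Elements dominated (in absolute value) by a finite product of absolute values from `S`. -/
def genSet (S : Set α) : Set α :=
  {x : α | ∃ l : List α, (∀ s ∈ l, s ∈ S) ∧ (l.map absv).prod ≤ absv x}

lemma subset_genSet (S : Set α) : S ⊆ genSet S := by
  intro s hs
  exact ⟨[s], fun t ht => by rwa [List.mem_singleton.1 ht], by simp⟩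

lemma le_absv_of_le {p x : α} (h1 : p ≤ x) (h2 : p ≤ rdiv 1 x) (h3 : p ≤ 1) : p ≤ absv x :=
  le_inf (le_inf h1 h2) h3

lemma bnd_mul (hec : ECyclic α) {p q x y : α} (hp : p ≤ absv x) (hq : q ≤ absv y) :
    p * q * (q * p) ≤ absv (x * y) := by
  have hp1 : p ≤ 1 := le_trans hp (absv_le_one x)
  have hq1 : q ≤ 1 := le_trans hq (absv_le_one y)
  have hpx : p ≤ x := le_trans hp (absv_le_self x)
  have hqy : q ≤ y := le_trans hq (absv_le_self y)
  have hpxr : p * x ≤ 1 := le_rdiv_iff.1 (le_trans hp (absv_le_rdiv x))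
  have hqyr : q * y ≤ 1 := le_rdiv_iff.1 (le_trans hq (absv_le_rdiv y))
  have hqp1 : q * p ≤ 1 := le_trans (mul_le_left hp1) hq1
  have hpq1 : p * q ≤ 1 := le_trans (mul_le_left hq1) hp1
  apply le_absv_of_le
  · exact le_trans (mul_le_left hqp1) (mul_le_mul'' hpx hqy)
  · refine le_trans (mul_le_right hpq1) (le_rdiv_iff.2 ?_)
    calc q * p * (x * y) = q * (p * x) * y := by rw [mul_assoc, mul_assoc, mul_assoc]
      _ ≤ q * 1 * y := mul_le_mul'' (mul_le_mul'' (le_refl q) hpxr) (le_refl y)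
      _ = q * y := by rw [mul_one]
      _ ≤ 1 := hqyr
  · exact le_trans (mul_le_left hqp1) hpq1

lemma bnd_ldiv (hec : ECyclic α) {p q x y : α} (hp : p ≤ absv x) (hq : q ≤ absv y) :
    p * q * (q * p) ≤ absv (ldiv x y) := by
  have hp1 : p ≤ 1 := le_trans hp (absv_le_one x)
  have hq1 : q ≤ 1 := le_trans hq (absv_le_one y)
  have hpx : p ≤ x := le_trans hp (absv_le_self x)
  have hqy : q ≤ y := le_trans hq (absv_le_self y)
  have hxp : x * p ≤ 1 :=
    le_ldiv_iff.1 (le_trans hp (le_of_le_of_eq (absv_le_rdiv x) (hec x).symm))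
  have hqyr : q * y ≤ 1 := le_rdiv_iff.1 (le_trans hq (absv_le_rdiv y))
  have hqp1 : q * p ≤ 1 := le_trans (mul_le_left hp1) hq1
  have hpq1 : p * q ≤ 1 := le_trans (mul_le_left hq1) hp1
  apply le_absv_of_le
  · refine le_trans (mul_le_left hqp1) (le_ldiv_iff.2 ?_)
    calc x * (p * q) = (x * p) * q := by rw [mul_assoc]
      _ ≤ 1 * q := mul_le_mul'' hxp (le_refl q)
      _ = q := one_mul q
      _ ≤ y := hqy
  · refine le_trans (mul_le_right hpq1) (le_rdiv_iff.2 ?_)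
    have hres : x * ldiv x y ≤ y := le_ldiv_iff.1 (le_refl (ldiv x y))
    calc q * p * ldiv x y = q * (p * ldiv x y) := by rw [mul_assoc]
      _ ≤ q * (x * ldiv x y) := mul_le_mul'' (le_refl q) (mul_le_mul'' hpx (le_refl _))
      _ ≤ q * y := mul_le_mul'' (le_refl q) hres
      _ ≤ 1 := hqyr
  · exact le_trans (mul_le_left hqp1) hpq1

lemma bnd_rdiv (hec : ECyclic α) {p q x y : α} (hp : p ≤ absv x) (hq : q ≤ absv y) :
    p * q * (q * p) ≤ absv (rdiv x y) := by
  have hp1 : p ≤ 1 := le_trans hp (absv_le_one x)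
  have hq1 : q ≤ 1 := le_trans hq (absv_le_one y)
  have hpx : p ≤ x := le_trans hp (absv_le_self x)
  have hqy : q ≤ y := le_trans hq (absv_le_self y)
  have hxp : x * p ≤ 1 :=
    le_ldiv_iff.1 (le_trans hp (le_of_le_of_eq (absv_le_rdiv x) (hec x).symm))
  have hqyr : q * y ≤ 1 := le_rdiv_iff.1 (le_trans hq (absv_le_rdiv y))
  have hqp1 : q * p ≤ 1 := le_trans (mul_le_left hp1) hq1
  have hpq1 : p * q ≤ 1 := le_trans (mul_le_left hq1) hp1
  have hres : rdiv x y * y ≤ x := le_rdiv_iff.1 (le_refl (rdiv x y))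
  apply le_absv_of_le
  · refine le_trans (mul_le_left hqp1) (le_rdiv_iff.2 ?_)
    calc p * q * y = p * (q * y) := by rw [mul_assoc]
      _ ≤ p * 1 := mul_le_mul'' (le_refl p) hqyr
      _ = p := mul_one p
      _ ≤ x := hpx
  · refine le_trans (mul_le_right hpq1) ?_
    rw [← hec (rdiv x y)]
    refine le_ldiv_iff.2 ?_
    calc rdiv x y * (q * p) = (rdiv x y * q) * p := by rw [mul_assoc]
      _ ≤ (rdiv x y * y) * p := mul_le_mul'' (mul_le_mul'' (le_refl _) hqy) (le_refl p)
      _ ≤ x * p := mul_le_mul'' hres (le_refl p)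
      _ ≤ 1 := hxp
  · exact le_trans (mul_le_left hqp1) hpq1

lemma bnd_sup {p q x y : α} (hp : p ≤ absv x) (hq : q ≤ absv y) :
    p * q ≤ absv (x ⊔ y) := by
  have hp1 : p ≤ 1 := le_trans hp (absv_le_one x)
  have hq1 : q ≤ 1 := le_trans hq (absv_le_one y)
  have hpxr : p * x ≤ 1 := le_rdiv_iff.1 (le_trans hp (absv_le_rdiv x))
  have hqyr : q * y ≤ 1 := le_rdiv_iff.1 (le_trans hq (absv_le_rdiv y))
  apply le_absv_of_le
  · exact le_trans (mul_le_left hq1) (le_trans (le_trans hp (absv_le_self x)) le_sup_left)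
  · refine le_rdiv_iff.2 ?_
    rw [mul_sup']
    apply sup_le
    · calc p * q * x ≤ p * x := mul_le_mul'' (mul_le_left hq1) (le_refl x)
        _ ≤ 1 := hpxr
    · calc p * q * y ≤ q * y := mul_le_mul'' (mul_le_right hp1) (le_refl y)
        _ ≤ 1 := hqyr
  · exact le_trans (mul_le_left hq1) hp1

lemma bnd_inf {p q x y : α} (hp : p ≤ absv x) (hq : q ≤ absv y) :
    p * q ≤ absv (x ⊓ y) := by
  have hp1 : p ≤ 1 := le_trans hp (absv_le_one x)
  have hq1 : q ≤ 1 := le_trans hq (absv_le_one y)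
  apply le_absv_of_le
  · refine le_inf ?_ ?_
    · exact le_trans (mul_le_left hq1) (le_trans hp (absv_le_self x))
    · exact le_trans (mul_le_right hp1) (le_trans hq (absv_le_self y))
  · refine le_rdiv_iff.2 ?_
    calc p * q * (x ⊓ y) ≤ p * (x ⊓ y) := mul_le_mul'' (mul_le_left hq1) (le_refl _)
      _ ≤ p * x := mul_le_mul'' (le_refl p) inf_le_left
      _ ≤ 1 := le_rdiv_iff.1 (le_trans hp (absv_le_rdiv x))
  · exact le_trans (mul_le_left hq1) hp1

lemma bnd_convex {p q a b x : α} (hp : p ≤ absv a) (hq : q ≤ absv b)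
    (hax : a ≤ x) (hxb : x ≤ b) : p * q ≤ absv x := by
  have hp1 : p ≤ 1 := le_trans hp (absv_le_one a)
  have hq1 : q ≤ 1 := le_trans hq (absv_le_one b)
  apply le_absv_of_le
  · exact le_trans (mul_le_left hq1) (le_trans (le_trans hp (absv_le_self a)) hax)
  · refine le_rdiv_iff.2 ?_
    calc p * q * x ≤ q * x := mul_le_mul'' (mul_le_right hp1) (le_refl x)
      _ ≤ q * b := mul_le_mul'' (le_refl q) hxb
      _ ≤ 1 := le_rdiv_iff.1 (le_trans hq (absv_le_rdiv b))
  · exact le_trans (mul_le_left hq1) hp1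

lemma genSet_isConvexSubalgebra (hec : ECyclic α) (S : Set α) :
    IsConvexSubalgebra (genSet S) := by
  constructor
  · exact ⟨[], by simp, by simp [absv_one]⟩
  case mul_mem =>
    rintro x ⟨l₁, hl₁, hp₁⟩ y ⟨l₂, hl₂, hp₂⟩
    refine ⟨l₁ ++ (l₂ ++ (l₂ ++ l₁)), ?_, ?_⟩
    · intro s hs
      simp only [List.mem_append] at hs
      rcases hs with h | h | h | h
      exacts [hl₁ s h, hl₂ s h, hl₂ s h, hl₁ s h]
    · have : ((l₁ ++ (l₂ ++ (l₂ ++ l₁))).map absv).prod =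
        (l₁.map absv).prod * (l₂.map absv).prod *
          ((l₂.map absv).prod * (l₁.map absv).prod) := by
        simp [List.map_append, List.prod_append, mul_assoc]
      rw [this]
      exact bnd_mul hec hp₁ hp₂
  case sup_mem =>
    rintro x ⟨l₁, hl₁, hp₁⟩ y ⟨l₂, hl₂, hp₂⟩
    refine ⟨l₁ ++ l₂, ?_, ?_⟩
    · intro s hs
      rcases List.mem_append.1 hs with h | h
      exacts [hl₁ s h, hl₂ s h]
    · rw [List.map_append, List.prod_append]
      exact bnd_sup hp₁ hp₂
  case inf_mem =>
    rintro x ⟨l₁, hl₁, hp₁⟩ y ⟨l₂, hl₂, hp₂⟩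
    refine ⟨l₁ ++ l₂, ?_, ?_⟩
    · intro s hs
      rcases List.mem_append.1 hs with h | h
      exacts [hl₁ s h, hl₂ s h]
    · rw [List.map_append, List.prod_append]
      exact bnd_inf hp₁ hp₂
  case ldiv_mem =>
    rintro x ⟨l₁, hl₁, hp₁⟩ y ⟨l₂, hl₂, hp₂⟩
    refine ⟨l₁ ++ (l₂ ++ (l₂ ++ l₁)), ?_, ?_⟩
    · intro s hs
      simp only [List.mem_append] at hs
      rcases hs with h | h | h | h
      exacts [hl₁ s h, hl₂ s h, hl₂ s h, hl₁ s h]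
    · have : ((l₁ ++ (l₂ ++ (l₂ ++ l₁))).map absv).prod =
        (l₁.map absv).prod * (l₂.map absv).prod *
          ((l₂.map absv).prod * (l₁.map absv).prod) := by
        simp [List.map_append, List.prod_append, mul_assoc]
      rw [this]
      exact bnd_ldiv hec hp₁ hp₂
  case rdiv_mem =>
    rintro x ⟨l₁, hl₁, hp₁⟩ y ⟨l₂, hl₂, hp₂⟩
    refine ⟨l₁ ++ (l₂ ++ (l₂ ++ l₁)), ?_, ?_⟩
    · intro s hs
      simp only [List.mem_append] at hs
      rcases hs with h | h | h | h
      exacts [hl₁ s h, hl₂ s h, hl₂ s h, hl₁ s h]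
    · have : ((l₁ ++ (l₂ ++ (l₂ ++ l₁))).map absv).prod =
        (l₁.map absv).prod * (l₂.map absv).prod *
          ((l₂.map absv).prod * (l₁.map absv).prod) := by
        simp [List.map_append, List.prod_append, mul_assoc]
      rw [this]
      exact bnd_rdiv hec hp₁ hp₂
  case convex =>
    rintro a ⟨l₁, hl₁, hp₁⟩ b ⟨l₂, hl₂, hp₂⟩ x hax hxb
    refine ⟨l₁ ++ l₂, ?_, ?_⟩
    · intro s hs
      rcases List.mem_append.1 hs with h | h
      exacts [hl₁ s h, hl₂ s h]
    · rw [List.map_append, List.prod_append]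
      exact bnd_convex hp₁ hp₂ hax hxb

lemma genSet_subset_of_subalgebra {M : Set α} (hM : IsConvexSubalgebra M) :
    genSet M ⊆ M := by
  rintro x ⟨l, hl, hp⟩
  have hprod : (l.map absv).prod ∈ M := by
    clear hp
    induction l with
    | nil => simpa using hM.one_mem
    | cons a t ih =>
      rw [List.map_cons, List.prod_cons]
      exact hM.mul_mem (hM.absv_mem (hl a (List.mem_cons_self)))
        (ih fun s hs => hl s (List.mem_cons_of_mem a hs))
  have habs : absv x ∈ M := hM.convex hprod hM.one_mem hp (absv_le_one x)
  have hub : ldiv (absv x) 1 ∈ M := hM.ldiv_mem habs hM.one_mem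
  refine hM.convex habs hub (absv_le_self x) ?_
  exact le_ldiv_iff.2 (absv_mul_self_le_one x)

section Prime

open ResiduatedLattice

variable {α : Type u} [ResiduatedLattice α]

lemma one_isConvexSubalgebra : IsConvexSubalgebra ({(1 : α)} : Set α) := by
  have hld : ldiv (1 : α) 1 = 1 := by
    apply le_antisymm
    · have h := le_ldiv_iff.1 (le_refl (ldiv (1:α) 1))
      rwa [one_mul] at h
    · exact le_ldiv_iff.2 (le_of_eq (one_mul 1))
  have hrd : rdiv (1 : α) 1 = 1 := by
    apply le_antisymm
    · have h := le_rdiv_iff.1 (le_refl (rdiv (1:α) 1))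
      rwa [mul_one] at h
    · exact le_rdiv_iff.2 (le_of_eq (one_mul 1))
  constructor
  · rfl
  case mul_mem => rintro x rfl y rfl; simp
  case sup_mem => rintro x rfl y rfl; simp
  case inf_mem => rintro x rfl y rfl; simp
  case ldiv_mem => rintro x rfl y rfl; simp [hld]
  case rdiv_mem => rintro x rfl y rfl; simp [hrd]
  case convex =>
    rintro a rfl b rfl x h1 h2
    show x = 1
    exact le_antisymm h2 h1

lemma sUnion_chain_isConvexSubalgebra {ch : Set (Set α)}
    (hch : IsChain (· ⊆ ·) ch) (hne : ch.Nonempty)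
    (hall : ∀ K ∈ ch, IsConvexSubalgebra K) : IsConvexSubalgebra (⋃₀ ch) := by
  have pair : ∀ {x y : α}, x ∈ ⋃₀ ch → y ∈ ⋃₀ ch →
      ∃ K ∈ ch, x ∈ K ∧ y ∈ K := by
    rintro x y ⟨A, hA, hxA⟩ ⟨B, hB, hyB⟩
    rcases hch.total hA hB with h | h
    · exact ⟨B, hB, h hxA, hyB⟩
    · exact ⟨A, hA, hxA, h hyB⟩
  obtain ⟨K₀, hK₀⟩ := hne
  constructor
  · exact ⟨K₀, hK₀, (hall K₀ hK₀).one_mem⟩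
  case mul_mem =>
    intro x hx y hy
    obtain ⟨K, hK, hxK, hyK⟩ := pair hx hy
    exact ⟨K, hK, (hall K hK).mul_mem hxK hyK⟩
  case sup_mem =>
    intro x hx y hy
    obtain ⟨K, hK, hxK, hyK⟩ := pair hx hy
    exact ⟨K, hK, (hall K hK).sup_mem hxK hyK⟩
  case inf_mem =>
    intro x hx y hy
    obtain ⟨K, hK, hxK, hyK⟩ := pair hx hy
    exact ⟨K, hK, (hall K hK).inf_mem hxK hyK⟩
  case ldiv_mem =>
    intro x hx y hy
    obtain ⟨K, hK, hxK, hyK⟩ := pair hx hy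
    exact ⟨K, hK, (hall K hK).ldiv_mem hxK hyK⟩
  case rdiv_mem =>
    intro x hx y hy
    obtain ⟨K, hK, hxK, hyK⟩ := pair hx hy
    exact ⟨K, hK, (hall K hK).rdiv_mem hxK hyK⟩
  case convex =>
    intro a ha b hb x hax hxb
    obtain ⟨K, hK, haK, hbK⟩ := pair ha hb
    exact ⟨K, hK, (hall K hK).convex haK hbK hax hxb⟩

lemma sInter_isConvexSubalgebra {ch : Set (Set α)}
    (hall : ∀ K ∈ ch, IsConvexSubalgebra K) : IsConvexSubalgebra (⋂₀ ch) := by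
  constructor
  · exact fun K hK => (hall K hK).one_mem
  case mul_mem =>
    intro x hx y hy K hK
    exact (hall K hK).mul_mem (hx K hK) (hy K hK)
  case sup_mem =>
    intro x hx y hy K hK
    exact (hall K hK).sup_mem (hx K hK) (hy K hK)
  case inf_mem =>
    intro x hx y hy K hK
    exact (hall K hK).inf_mem (hx K hK) (hy K hK)
  case ldiv_mem =>
    intro x hx y hy K hK
    exact (hall K hK).ldiv_mem (hx K hK) (hy K hK)
  case rdiv_mem =>
    intro x hx y hy K hK
    exact (hall K hK).rdiv_mem (hx K hK) (hy K hK)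
  case convex =>
    intro a ha b hb x hax hxb K hK
    exact (hall K hK).convex (ha K hK) (hb K hK) hax hxb

/-- Key existence: for `c ≤ 1`, `c ≠ 1`, there is a minimal prime not containing `c`. -/
lemma exists_minimal_prime_not_mem (hec : ECyclic α) {c : α} (hc1 : c ≤ 1) (hcne : c ≠ 1) :
    ∃ P : Set α, IsMinimalPrimeConvex P ∧ c ∉ P := by
  -- Step 1: a maximal convex subalgebra avoiding c
  have hone : ({(1:α)} : Set α) ∈ {K : Set α | IsConvexSubalgebra K ∧ c ∉ K} :=
    ⟨one_isConvexSubalgebra, fun h => hcne (Set.mem_singleton_iff.1 h)⟩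
  obtain ⟨M, -, hMmax⟩ := zorn_subset_nonempty
    {K : Set α | IsConvexSubalgebra K ∧ c ∉ K}
    (fun ch hchS hch hne => ⟨⋃₀ ch,
      ⟨sUnion_chain_isConvexSubalgebra hch hne (fun K hK => (hchS hK).1),
       fun ⟨K, hK, hcK⟩ => (hchS hK).2 hcK⟩,
      fun K hK => Set.subset_sUnion_of_mem hK⟩)
    _ hone
  obtain ⟨⟨hMconv, hcM⟩, hMup⟩ := hMmax
  -- M is prime
  have hMprime : IsPrimeConvex M := by
    refine ⟨hMconv, ?_⟩
    intro X Y hX hY hXY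
    by_contra hcon
    push_neg at hcon
    obtain ⟨hXM, hYM⟩ := hcon
    obtain ⟨x₀, hx₀X, hx₀M⟩ := Set.not_subset.1 hXM
    obtain ⟨y₀, hy₀Y, hy₀M⟩ := Set.not_subset.1 hYM
    -- c belongs to the subalgebras generated by M ∪ {x₀} and M ∪ {y₀}
    have hgen : ∀ z : α, z ∉ M → z ∈ genSet (M ∪ {z}) → c ∈ genSet (M ∪ {z}) := by
      intro z hzM hzG
      by_contra hcG
      have hsub : genSet (M ∪ {z}) ⊆ M :=
        hMup ⟨genSet_isConvexSubalgebra hec _, hcG⟩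
          (fun w hw => subset_genSet _ (Set.mem_union_left _ hw))
      exact hzM (hsub hzG)
    have hcx : c ∈ genSet (M ∪ {x₀}) :=
      hgen x₀ hx₀M (subset_genSet _ (Set.mem_union_right _ rfl))
    have hcy : c ∈ genSet (M ∪ {y₀}) :=
      hgen y₀ hy₀M (subset_genSet _ (Set.mem_union_right _ rfl))
    obtain ⟨l₁, hl₁, hp₁⟩ := hcx
    obtain ⟨l₂, hl₂, hp₂⟩ := hcy
    -- the pairwise joins all lie in M
    set L : List α := supProd (l₁.map absv) (l₂.map absv) with hL
    have hLmem : ∀ w ∈ L, w ∈ M := by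
      intro w hw
      obtain ⟨u, hu, v, hv, rfl⟩ := mem_supProd hw
      obtain ⟨s, hs, rfl⟩ := List.mem_map.1 hu
      obtain ⟨t, ht, rfl⟩ := List.mem_map.1 hv
      have huv1 : absv s ⊔ absv t ≤ 1 := sup_le (absv_le_one s) (absv_le_one t)
      rcases hl₁ s hs with hsM | hsx
      · exact hMconv.convex (hMconv.absv_mem hsM) hMconv.one_mem le_sup_left huv1
      · rcases hl₂ t ht with htM | hty
        · exact hMconv.convex (hMconv.absv_mem htM) hMconv.one_mem le_sup_right huv1
        · have hsX : s ∈ X := by rw [show s = x₀ from hsx]; exact hx₀X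
          have htY : t ∈ Y := by rw [show t = y₀ from hty]; exact hy₀Y
          exact hXY ⟨hX.convex (hX.absv_mem hsX) hX.one_mem le_sup_left huv1,
            hY.convex (hY.absv_mem htY) hY.one_mem le_sup_right huv1⟩
    -- and their product bounds |c| from below
    have hcM' : c ∈ genSet M := by
      refine ⟨L, hLmem, ?_⟩
      calc (L.map absv).prod ≤ L.prod := map_absv_prod_le L
        _ ≤ (l₁.map absv).prod ⊔ (l₂.map absv).prod := by
            refine supProd_prod_le ?_ ?_ <;>
              · intro u hu
                obtain ⟨s, _, rfl⟩ := List.mem_map.1 hu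
                exact absv_le_one s
        _ ≤ absv c := sup_le hp₁ hp₂
    exact hcM (genSet_subset_of_subalgebra hMconv hcM')
  -- Step 2: a minimal prime below M avoiding c
  obtain ⟨P, -, hPmin⟩ := zorn_superset_nonempty
    {Q : Set α | IsPrimeConvex Q ∧ c ∉ Q}
    (fun ch hchS hch hne => by
      obtain ⟨Q₀, hQ₀⟩ := hne
      refine ⟨⋂₀ ch, ⟨⟨sInter_isConvexSubalgebra (fun K hK => (hchS hK).1.1), ?_⟩, ?_⟩,
        fun K hK => Set.sInter_subset_of_mem hK⟩
      · intro X Y hX hY hXY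
        by_contra hcon
        push_neg at hcon
        obtain ⟨hXi, hYi⟩ := hcon
        obtain ⟨x, hxX, hxI⟩ := Set.not_subset.1 hXi
        obtain ⟨y, hyY, hyI⟩ := Set.not_subset.1 hYi
        simp only [Set.mem_sInter, not_forall] at hxI hyI
        obtain ⟨A, hA, hxA⟩ := hxI
        obtain ⟨B, hB, hyB⟩ := hyI
        rcases hch.total hA hB with h | h
        · rcases (hchS hA).1.2 X Y hX hY
            (Set.Subset.trans hXY (Set.sInter_subset_of_mem hA)) with hXA | hYA
          · exact hxA (hXA hxX)
          · exact hyB ((h (hYA hyY)))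
        · rcases (hchS hB).1.2 X Y hX hY
            (Set.Subset.trans hXY (Set.sInter_subset_of_mem hB)) with hXB | hYB
          · exact hxA (h (hXB hxX))
          · exact hyB (hYB hyY)
      · intro hcI
        exact (hchS hQ₀).2 (hcI Q₀ hQ₀))
    M ⟨hMprime, hcM⟩
  obtain ⟨⟨hPprime, hcP⟩, hPlow⟩ := hPmin
  refine ⟨P, ⟨hPprime, ?_, ?_⟩, hcP⟩
  · intro h
    exact hcP (h ▸ Set.mem_univ c)
  · intro Q hQ _ hQP
    have hcQ : c ∉ Q := fun h => hcP (hQP h)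
    exact Set.Subset.antisymm hQP (hPlow ⟨hQ, hcQ⟩ hQP)

end Prime

/-- `H^⊥` is the intersection of the minimal primes not containing `H`. -/
theorem stmt13 {α : Type u} [ResiduatedLattice α] (hec : ECyclic α)
    (H : Set α) (hH : IsConvexSubalgebra H) :
    polar H = ⋂₀ {P : Set α | IsMinimalPrimeConvex P ∧ ¬ H ⊆ P} := by
  apply Set.Subset.antisymm
  · intro a ha
    refine Set.mem_sInter.2 ?_
    rintro P ⟨hPmin, hHP⟩
    obtain ⟨⟨hPconv, hPpr⟩, hPne, -⟩ := hPmin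
    obtain ⟨h₀, hh₀H, hh₀P⟩ := Set.not_subset.1 hHP
    have hc : absv a ⊔ absv h₀ = 1 := ha h₀ hh₀H
    have hXY : genSet {a} ∩ genSet {h₀} ⊆ P := by
      rintro x ⟨⟨l₁, hl₁, hp₁⟩, ⟨l₂, hl₂, hp₂⟩⟩
      have hx1 : x = 1 := by
        apply eq_one_of_one_le_absv
        have hL : ∀ w ∈ supProd (l₁.map absv) (l₂.map absv), w = 1 := by
          intro w hw
          obtain ⟨u, hu, v, hv, rfl⟩ := mem_supProd hw
          obtain ⟨s, hs, rfl⟩ := List.mem_map.1 hu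
          obtain ⟨t, ht, rfl⟩ := List.mem_map.1 hv
          rw [Set.mem_singleton_iff.1 (hl₁ s hs), Set.mem_singleton_iff.1 (hl₂ t ht)]
          exact hc
        calc (1:α) = (supProd (l₁.map absv) (l₂.map absv)).prod :=
              (list_prod_eq_one hL).symm
          _ ≤ (l₁.map absv).prod ⊔ (l₂.map absv).prod := by
              refine supProd_prod_le ?_ ?_ <;>
                · intro u hu
                  obtain ⟨s, -, rfl⟩ := List.mem_map.1 hu
                  exact absv_le_one s
          _ ≤ absv x := sup_le hp₁ hp₂
      rw [hx1]
      exact hPconv.one_mem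
    rcases hPpr _ _ (genSet_isConvexSubalgebra hec _) (genSet_isConvexSubalgebra hec _)
        hXY with h | h
    · exact h (subset_genSet _ rfl)
    · exact absurd (h (subset_genSet _ rfl)) hh₀P
  · intro a ha
    intro h hh
    by_contra hne
    have hc1 : absv a ⊔ absv h ≤ 1 := sup_le (absv_le_one a) (absv_le_one h)
    obtain ⟨P, hPmin, hcP⟩ := exists_minimal_prime_not_mem hec hc1 hne
    have hPconv := hPmin.1.1
    have hHP : ¬ H ⊆ P := by
      intro hsub
      exact hcP (hPconv.convex (hPconv.absv_mem (hsub hh)) hPconv.one_mem le_sup_right hc1)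
    have haP : a ∈ P := Set.mem_sInter.1 ha P ⟨hPmin, hHP⟩
    exact hcP (hPconv.convex (hPconv.absv_mem haP) hPconv.one_mem le_sup_left hc1)
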